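/- arXiv:1810.08839 — 2 statements merged into one kernel-verified Lean document; each statement's English description precedes it below -/
import Mathlib

section
/- Let n ≥ 1 and 0 ≤ r ≤ n be integers and let f : [0,1] → ℝ be r times continuously differentiable. Then sup_{x∈[0,1]} |(B_n f)^{(r)}(x) − B_{n−r}(f^{(r)})(x)| ≤ (r(r−1)/(2n))·‖f^{(r)}‖ + ω(f^{(r)}, r/n). -/
/-- Bernstein basis polynomial `p_{n,k}(x) = C(n,k) x^k (1-x)^{n-k}`. -/
noncomputable def bern (n k : ℕ) (x : ℝ) : ℝ :=
  (n.choose k : ℝ) * x ^ k * (1 - x) ^ (n - k)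

/-- Bernstein operator `B_n(f;x) = Σ_{k=0}^n p_{n,k}(x) f(k/n)`. -/
noncomputable def bernsteinOp (n : ℕ) (f : ℝ → ℝ) (x : ℝ) : ℝ :=
  ∑ k ∈ Finset.range (n + 1), bern n k x * f ((k : ℝ) / (n : ℝ))

/-- Supremum norm on `[0,1]`. -/
noncomputable def supNorm (g : ℝ → ℝ) : ℝ :=
  ⨆ x : Set.Icc (0:ℝ) 1, |g x|

/-- First modulus of continuity on `[0,1]`. -/
noncomputable def modCont (g : ℝ → ℝ) (δ : ℝ) : ℝ :=
  sSup {d : ℝ | ∃ x ∈ Set.Icc (0:ℝ) 1, ∃ y ∈ Set.Icc (0:ℝ) 1, |x - y| ≤ δ ∧ d = |g x - g y|}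

/-- Sum against the Bernstein basis with arbitrary coefficients. -/
noncomputable def bSum (n : ℕ) (a : ℕ → ℝ) (x : ℝ) : ℝ :=
  ∑ k ∈ Finset.range (n + 1), bern n k x * a k

/-- Iterated forward difference of a sequence. -/
def fdiff : ℕ → (ℕ → ℝ) → (ℕ → ℝ)
  | 0, a => a
  | (j+1), a => fdiff j (fun k => a (k+1) - a k)

lemma fdiff_succ_eq (j : ℕ) : ∀ (a : ℕ → ℝ) (k : ℕ),
    fdiff (j+1) a k = fdiff j a (k+1) - fdiff j a k := by
  induction j with
  | zero => intro a k; rfl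
  | succ j ih =>
    intro a k
    show fdiff (j+1) (fun k => a (k+1) - a k) k = _
    rw [ih (fun k => a (k+1) - a k) k]
    rfl

lemma bern_deriv_eq (n k : ℕ) (hn : 1 ≤ n) (hk : k ≤ n) (x : ℝ) :
    (n.choose k : ℝ) * ((k : ℝ) * x ^ (k-1) * (1-x) ^ (n-k)
        - ((n-k : ℕ) : ℝ) * x ^ k * (1-x) ^ (n-k-1))
      = (n : ℝ) * ((if k = 0 then 0 else bern (n-1) (k-1) x) - bern (n-1) k x) := by
  cases k with
  | zero =>
    simp only [Nat.choose_zero_right, Nat.cast_one, Nat.cast_zero, pow_zero, if_pos rfl,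
      Nat.sub_zero, bern, Nat.choose_zero_right, if_true, eq_self_iff_true]
    ring
  | succ j =>
    have hjn : j + 1 ≤ n := hk
    have hs : (n-1).succ = n := by omega
    have h1 : (n.choose (j+1) : ℝ) * ((j:ℝ)+1) = (n:ℝ) * ((n-1).choose j : ℝ) := by
      have hb := Nat.add_one_mul_choose_eq (n-1) j
      rw [show n - 1 + 1 = n by omega] at hb
      -- hb : n * (n-1).choose j = n.choose (j+1) * (j+1)
      exact_mod_cast hb.symm
    have h2 : (n.choose (j+1) : ℝ) * ((n - (j+1) : ℕ) : ℝ)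
        = (n:ℝ) * ((n-1).choose (j+1) : ℝ) := by
      have ha := Nat.choose_succ_right_eq n (j+1)
      have hb := Nat.add_one_mul_choose_eq (n-1) (j+1)
      rw [show n - 1 + 1 = n by omega] at hb
      have hc : n.choose (j+1) * (n - (j+1)) = n * (n-1).choose (j+1) := by
        rw [← ha, ← hb]
      exact_mod_cast hc
    rw [if_neg (Nat.succ_ne_zero j)]
    simp only [bern, Nat.succ_sub_one]
    have e1 : n - 1 - j = n - (j+1) := by omega
    have e2 : n - 1 - (j+1) = n - (j+1) - 1 := by omega
    rw [e1, e2]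
    push_cast
    linear_combination (x^j * (1-x)^(n-(j+1))) * h1 - (x^(j+1) * (1-x)^(n-(j+1)-1)) * h2

lemma hasDerivAt_bern_term (n k : ℕ) (x : ℝ) (a : ℝ) :
    HasDerivAt (fun x => bern n k x * a)
      ((n.choose k : ℝ) * ((k : ℝ) * x ^ (k-1) * (1-x) ^ (n-k)
        - ((n-k : ℕ) : ℝ) * x ^ k * (1-x) ^ (n-k-1)) * a) x := by
  have hx : HasDerivAt (fun x : ℝ => x ^ k) ((k : ℝ) * x ^ (k-1)) x := hasDerivAt_pow k x
  have h1 : HasDerivAt (fun x : ℝ => 1 - x) (-1) x := (hasDerivAt_id x).const_sub 1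
  have hp : HasDerivAt (fun x : ℝ => (1 - x) ^ (n-k))
      (((n-k : ℕ) : ℝ) * (1-x) ^ (n-k-1) * (-1)) x := h1.pow (n-k)
  have hmul := ((hx.fun_mul hp).const_mul ((n.choose k : ℝ))).mul_const a
  have heq : (fun x => bern n k x * a)
      = fun x => (n.choose k : ℝ) * (x ^ k * (1-x) ^ (n-k)) * a := by
    funext y; simp only [bern]; ring
  rw [heq]
  refine hmul.congr_deriv (Eq.symm ?_)
  ring

lemma hasDerivAt_bSum (n : ℕ) (hn : 1 ≤ n) (a : ℕ → ℝ) (x : ℝ) :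
    HasDerivAt (bSum n a)
      ((n : ℝ) * bSum (n-1) (fun k => a (k+1) - a k) x) x := by
  have hterm : ∀ k ∈ Finset.range (n+1),
      HasDerivAt (fun x => bern n k x * a k)
        ((n : ℝ) * ((if k = 0 then 0 else bern (n-1) (k-1) x) - bern (n-1) k x) * a k) x := by
    intro k hk
    have hk' : k ≤ n := Nat.lt_succ_iff.mp (Finset.mem_range.mp hk)
    have := hasDerivAt_bern_term n k x (a k)
    rwa [bern_deriv_eq n k hn hk' x] at this
  have hsum := HasDerivAt.fun_sum hterm
  have hfun : (bSum n a) = fun x => ∑ k ∈ Finset.range (n+1), bern n k x * a k := rfl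
  rw [hfun]
  refine hsum.congr_deriv (Eq.symm ?_)
  rw [Finset.sum_range_succ']
  simp only [Nat.succ_ne_zero, if_false, if_true, Nat.add_sub_cancel, reduceIte]
  have hBn : bern (n-1) n x = 0 := by
    simp [bern, Nat.choose_eq_zero_of_lt (by omega : n - 1 < n)]
  have hb : ∑ k ∈ Finset.range n, bern (n-1) (k+1) x * a (k+1) + bern (n-1) 0 x * a 0
      = ∑ k ∈ Finset.range n, bern (n-1) k x * a k := by
    have h1 := Finset.sum_range_succ' (fun k => bern (n-1) k x * a k) n
    have h2 := Finset.sum_range_succ (fun k => bern (n-1) k x * a k) n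
    rw [hBn] at h2
    rw [h1] at h2
    linarith [h2]
  have htop : Finset.range (n-1+1) = Finset.range n := by rw [Nat.sub_add_cancel hn]
  have e1 : (n:ℝ) * bSum (n-1) (fun k => a (k+1) - a k) x
      = (n:ℝ) * ∑ k ∈ Finset.range n, bern (n-1) k x * a (k+1)
        - (n:ℝ) * ∑ k ∈ Finset.range n, bern (n-1) k x * a k := by
    rw [bSum, htop, Finset.mul_sum, Finset.mul_sum, Finset.mul_sum, ← Finset.sum_sub_distrib]
    exact Finset.sum_congr rfl (fun k _ => by ring)
  have e2 : ∑ k ∈ Finset.range n, (n:ℝ) * (bern (n-1) k x - bern (n-1) (k+1) x) * a (k+1)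
      = (n:ℝ) * ∑ k ∈ Finset.range n, bern (n-1) k x * a (k+1)
        - (n:ℝ) * ∑ k ∈ Finset.range n, bern (n-1) (k+1) x * a (k+1) := by
    rw [Finset.mul_sum, Finset.mul_sum, ← Finset.sum_sub_distrib]
    exact Finset.sum_congr rfl (fun k _ => by ring)
  rw [e1, e2]
  linear_combination (n:ℝ) * hb

lemma iteratedDeriv_bSum (n : ℕ) (a : ℕ → ℝ) : ∀ r : ℕ, r ≤ n →
    iteratedDeriv r (bSum n a)
      = fun x => (∏ i ∈ Finset.range r, ((n:ℝ) - i)) * bSum (n - r) (fdiff r a) x := by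
  intro r
  induction r with
  | zero =>
    intro _
    simp [fdiff, iteratedDeriv_zero]
  | succ r ih =>
    intro hrn
    have hr : r ≤ n := by omega
    rw [iteratedDeriv_succ, ih hr]
    funext x
    have h1 : 1 ≤ n - r := by omega
    have hd := hasDerivAt_bSum (n - r) h1 (fdiff r a) x
    have hd2 := hd.const_mul (∏ i ∈ Finset.range r, ((n:ℝ) - i))
    rw [hd2.deriv, Finset.prod_range_succ]
    have hcast : ((n - r : ℕ) : ℝ) = (n : ℝ) - r := by
      push_cast [Nat.cast_sub hr]; ring
    have hfd : (fun k => fdiff r a (k+1) - fdiff r a k) = fdiff (r+1) a := by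
      funext k; rw [fdiff_succ_eq]
    have hnr : n - r - 1 = n - (r+1) := by omega
    rw [hcast] at hd2 ⊢
    rw [← hnr, ← hfd]
    ring

lemma iteratedDeriv_sub' {r : ℕ} {f g : ℝ → ℝ} (hf : ContDiff ℝ r f) (hg : ContDiff ℝ r g) :
    iteratedDeriv r (fun y => f y - g y) = fun y => iteratedDeriv r f y - iteratedDeriv r g y := by
  funext y
  rw [← iteratedDerivWithin_univ, ← iteratedDerivWithin_univ, ← iteratedDerivWithin_univ]
  exact iteratedDerivWithin_sub (Set.mem_univ y) uniqueDiffOn_univ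
    hf.contDiffWithinAt hg.contDiffWithinAt

lemma fdiff_mvt (n : ℕ) (hn : 1 ≤ n) : ∀ (r : ℕ) (f : ℝ → ℝ), ContDiff ℝ r f → ∀ k : ℕ,
    ∃ ξ ∈ Set.Icc ((k:ℝ)/n) (((k:ℝ)+r)/n),
      fdiff r (fun j => f ((j:ℝ)/n)) k = (1/(n:ℝ))^r * iteratedDeriv r f ξ := by
  have hn0 : (0:ℝ) < n := by exact_mod_cast hn
  intro r
  induction r with
  | zero =>
    intro f _ k
    exact ⟨(k:ℝ)/n, by simp, by simp [fdiff]⟩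
  | succ r ih =>
    intro f hf k
    set g : ℝ → ℝ := fun y => f (y + 1/n) - f y with hgdef
    have hshift : ContDiff ℝ r (fun y : ℝ => f (y + 1/n)) := by
      have : ContDiff ℝ r f := hf.of_le (by exact_mod_cast Nat.le_succ r)
      exact this.comp (contDiff_id.add contDiff_const)
    have hfr : ContDiff ℝ r f := hf.of_le (by exact_mod_cast Nat.le_succ r)
    have hg : ContDiff ℝ r g := hshift.sub hfr
    have hfd : fdiff (r+1) (fun j => f ((j:ℝ)/n)) k = fdiff r (fun j => g ((j:ℝ)/n)) k := by
      show fdiff r (fun j => f (((j+1:ℕ):ℝ)/n) - f ((j:ℝ)/n)) k = _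
      congr 1
      funext j
      have : ((j+1:ℕ):ℝ)/n = (j:ℝ)/n + 1/n := by push_cast; field_simp
      rw [this]
    obtain ⟨ξ, hξ, hval⟩ := ih g hg k
    have hsplit : iteratedDeriv r g = fun y => iteratedDeriv r f (y + 1/n) - iteratedDeriv r f y := by
      rw [hgdef, iteratedDeriv_sub' hshift hfr, iteratedDeriv_comp_add_const r f (1/n)]
    -- mean value theorem on [ξ, ξ + 1/n]
    have hlt : ξ < ξ + 1/n := by
      have : (0:ℝ) < 1/n := by positivity
      linarith
    have hcont : ContinuousOn (iteratedDeriv r f) (Set.Icc ξ (ξ + 1/n)) :=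
      (hf.continuous_iteratedDeriv r (by exact_mod_cast Nat.le_succ r)).continuousOn
    have hderiv : ∀ y ∈ Set.Ioo ξ (ξ + 1/n),
        HasDerivAt (iteratedDeriv r f) (iteratedDeriv (r+1) f y) y := by
      intro y _
      have hd := (hf.differentiable_iteratedDeriv r (by exact_mod_cast Nat.lt_succ_self r)) y
      have hda := hd.hasDerivAt
      have hds : deriv (iteratedDeriv r f) y = iteratedDeriv (r+1) f y := by
        rw [iteratedDeriv_succ]
      rwa [hds] at hda
    obtain ⟨ζ, hζ, hz⟩ := exists_hasDerivAt_eq_slope (iteratedDeriv r f)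
      (iteratedDeriv (r+1) f) hlt hcont hderiv
    refine ⟨ζ, ⟨?_, ?_⟩, ?_⟩
    · exact le_trans hξ.1 (le_of_lt hζ.1)
    · have h2 : ξ ≤ ((k:ℝ)+r)/n := hξ.2
      have : ζ < ξ + 1/n := hζ.2
      have : ζ ≤ ((k:ℝ)+r)/n + 1/n := by linarith
      calc ζ ≤ ((k:ℝ)+r)/n + 1/n := this
        _ = ((k:ℝ)+((r:ℕ)+1:ℕ))/n := by push_cast; field_simp; ring
    · rw [hfd, hval, hsplit]
      have hne : ξ + 1/n - ξ ≠ 0 := by linarith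
      have : iteratedDeriv r f (ξ + 1/n) - iteratedDeriv r f ξ
          = iteratedDeriv (r+1) f ζ * (1/n) := by
        rw [hz, show ξ + 1/(n:ℝ) - ξ = 1/n from by ring]
        exact (div_mul_cancel₀ _ (by positivity)).symm
      simp only [this]
      rw [pow_succ]
      push_cast
      ring

lemma abs_le_supNorm {g : ℝ → ℝ} (hg : Continuous g) {t : ℝ} (ht : t ∈ Set.Icc (0:ℝ) 1) :
    |g t| ≤ supNorm g := by
  have hb : BddAbove (Set.range fun x : Set.Icc (0:ℝ) 1 => |g x|) := by
    obtain ⟨M, hM⟩ := (isCompact_Icc.image (hg.abs)).bddAbove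
    refine ⟨M, ?_⟩
    rintro y ⟨z, rfl⟩
    exact hM ⟨z, z.2, rfl⟩
  exact le_ciSup hb (⟨t, ht⟩ : Set.Icc (0:ℝ) 1)

lemma supNorm_nonneg {g : ℝ → ℝ} (hg : Continuous g) : 0 ≤ supNorm g :=
  le_trans (abs_nonneg (g 0)) (abs_le_supNorm hg (by norm_num))

lemma abs_sub_le_modCont {g : ℝ → ℝ} (hg : Continuous g) {δ x y : ℝ}
    (hx : x ∈ Set.Icc (0:ℝ) 1) (hy : y ∈ Set.Icc (0:ℝ) 1) (hxy : |x - y| ≤ δ) :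
    |g x - g y| ≤ modCont g δ := by
  apply le_csSup
  · refine ⟨2 * supNorm g, ?_⟩
    rintro d ⟨u, hu, v, hv, _, rfl⟩
    calc |g u - g v| ≤ |g u| + |g v| := abs_sub _ _
      _ ≤ supNorm g + supNorm g := add_le_add (abs_le_supNorm hg hu) (abs_le_supNorm hg hv)
      _ = 2 * supNorm g := by ring
  · exact ⟨x, hx, y, hy, hxy, rfl⟩

lemma modCont_nonneg {g : ℝ → ℝ} (hg : Continuous g) {δ : ℝ} (hδ : 0 ≤ δ) :
    0 ≤ modCont g δ := by
  have := abs_sub_le_modCont hg (g := g) (x := 0) (y := 0) (δ := δ)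
    (by norm_num) (by norm_num) (by simpa)
  simpa using this

lemma bern_sum_eq_one (m : ℕ) (x : ℝ) :
    ∑ k ∈ Finset.range (m+1), bern m k x = 1 := by
  have h := add_pow x (1 - x) m
  have : ∑ k ∈ Finset.range (m+1), bern m k x
      = ∑ k ∈ Finset.range (m+1), x ^ k * (1-x) ^ (m-k) * (m.choose k : ℝ) :=
    Finset.sum_congr rfl (fun k _ => by simp [bern]; ring)
  rw [this, ← h]
  norm_num

lemma bern_nonneg {m k : ℕ} {x : ℝ} (hx : x ∈ Set.Icc (0:ℝ) 1) : 0 ≤ bern m k x := by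
  obtain ⟨h0, h1⟩ := hx
  have : (0:ℝ) ≤ 1 - x := by linarith
  unfold bern
  positivity

lemma prod_one_sub_ge (r : ℕ) (a : ℕ → ℝ)
    (h : ∀ i ∈ Finset.range r, 0 ≤ a i ∧ a i ≤ 1) :
    1 - ∑ i ∈ Finset.range r, a i ≤ ∏ i ∈ Finset.range r, (1 - a i) := by
  induction r with
  | zero => simp
  | succ r ih =>
    have hr : ∀ i ∈ Finset.range r, 0 ≤ a i ∧ a i ≤ 1 := fun i hi =>
      h i (Finset.mem_range.mpr (by have := Finset.mem_range.mp hi; omega))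
    have har := h r (Finset.self_mem_range_succ r)
    have hsum : (0:ℝ) ≤ ∑ i ∈ Finset.range r, a i :=
      Finset.sum_nonneg (fun i hi => (hr i hi).1)
    rw [Finset.prod_range_succ, Finset.sum_range_succ]
    have hprod := ih hr
    nlinarith [har.1, har.2]

lemma prod_one_sub_mem {r : ℕ} {a : ℕ → ℝ}
    (h : ∀ i ∈ Finset.range r, 0 ≤ a i ∧ a i ≤ 1) :
    0 ≤ ∏ i ∈ Finset.range r, (1 - a i) ∧ ∏ i ∈ Finset.range r, (1 - a i) ≤ 1 := by
  constructor
  · exact Finset.prod_nonneg (fun i hi => by linarith [(h i hi).2])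
  · apply Finset.prod_le_one
    · intro i hi; linarith [(h i hi).2]
    · intro i hi; linarith [(h i hi).1]

lemma gauss_sum_real (r : ℕ) : ∑ i ∈ Finset.range r, (i:ℝ) = (r:ℝ)*((r:ℝ)-1)/2 := by
  induction r with
  | zero => simp
  | succ s ih =>
    rw [Finset.sum_range_succ, ih]
    push_cast
    ring

lemma dist_node_le (n r k : ℕ) (hn : 1 ≤ n) (hr : r ≤ n) (hk : k ≤ n - r) {ξ : ℝ}
    (h1 : (k:ℝ)/n ≤ ξ) (h2 : ξ ≤ ((k:ℝ)+r)/n) :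
    |ξ - (k:ℝ)/((n-r:ℕ):ℝ)| ≤ (r:ℝ)/n := by
  have hn0 : (0:ℝ) < n := by exact_mod_cast hn
  rcases eq_or_lt_of_le hr with heq | hlt
  · -- r = n, so k = 0
    have hk0 : k = 0 := by omega
    have hnr : n - r = 0 := by omega
    subst hk0
    rw [hnr]
    simp only [Nat.cast_zero, zero_div, sub_zero] at h1 h2 ⊢
    rw [abs_of_nonneg (le_trans (le_of_eq rfl) h1)]
    calc ξ ≤ (0 + (r:ℝ))/n := h2
      _ = (r:ℝ)/n := by ring_nf
  · have hm0 : (0:ℝ) < (n:ℝ) - r := by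
      have : (r:ℝ) < n := by exact_mod_cast hlt
      linarith
    have hcast : ((n-r:ℕ):ℝ) = (n:ℝ) - r := by
      push_cast [Nat.cast_sub hr]; ring
    rw [hcast, abs_sub_le_iff]
    have hkr : (k:ℝ) ≤ (n:ℝ) - r := by
      rw [← hcast]; exact_mod_cast hk
    have hk0 : (0:ℝ) ≤ k := Nat.cast_nonneg k
    constructor
    · have hq : (k:ℝ)/n ≤ (k:ℝ)/((n:ℝ)-r) := by
        rw [div_le_div_iff₀ hn0 hm0]
        nlinarith [(Nat.cast_nonneg r : (0:ℝ) ≤ (r:ℝ))]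
      have hadd : ((k:ℝ)+r)/n = (k:ℝ)/n + (r:ℝ)/n := by ring
      linarith [h2, hq, hadd ▸ h2]
    · have hq : (k:ℝ)/((n:ℝ)-r) ≤ ((k:ℝ)+r)/n := by
        rw [div_le_div_iff₀ hm0 hn0]
        nlinarith [(Nat.cast_nonneg r : (0:ℝ) ≤ (r:ℝ))]
      have hadd : ((k:ℝ)+r)/n = (k:ℝ)/n + (r:ℝ)/n := by ring
      linarith

lemma coeff_facts (n r : ℕ) (hn : 1 ≤ n) (hr : r ≤ n) :
    0 ≤ (∏ i ∈ Finset.range r, ((n:ℝ) - i)) * (1/(n:ℝ))^r ∧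
    (∏ i ∈ Finset.range r, ((n:ℝ) - i)) * (1/(n:ℝ))^r ≤ 1 ∧
    1 - (∏ i ∈ Finset.range r, ((n:ℝ) - i)) * (1/(n:ℝ))^r
      ≤ (r:ℝ)*((r:ℝ)-1)/(2*(n:ℝ)) := by
  have hn0 : (0:ℝ) < n := by exact_mod_cast hn
  have hpow : (1/(n:ℝ))^r = ∏ _i ∈ Finset.range r, (1/(n:ℝ)) := by
    rw [Finset.prod_const, Finset.card_range]
  have hprod : (∏ i ∈ Finset.range r, ((n:ℝ) - i)) * (1/(n:ℝ))^r
      = ∏ i ∈ Finset.range r, (1 - (i:ℝ)/n) := by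
    rw [hpow, ← Finset.prod_mul_distrib]
    refine Finset.prod_congr rfl (fun i _ => ?_)
    field_simp
  have hmem : ∀ i ∈ Finset.range r, 0 ≤ (i:ℝ)/n ∧ (i:ℝ)/n ≤ 1 := by
    intro i hi
    have hir : i < r := Finset.mem_range.mp hi
    have : (i:ℝ) ≤ n := by
      have : i ≤ n := by omega
      exact_mod_cast this
    exact ⟨by positivity, by rw [div_le_one hn0]; exact this⟩
  obtain ⟨hp0, hp1⟩ := prod_one_sub_mem hmem
  have hsum : ∑ i ∈ Finset.range r, (i:ℝ)/n = (r:ℝ)*((r:ℝ)-1)/(2*(n:ℝ)) := by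
    rw [← Finset.sum_div, gauss_sum_real r]
    ring
  refine ⟨hprod ▸ hp0, hprod ▸ hp1, ?_⟩
  rw [hprod]
  have h := prod_one_sub_ge r _ hmem
  rw [hsum] at h
  linarith

theorem bernstein_derivative_difference
    (n r : ℕ) (hn : 1 ≤ n) (hr : r ≤ n) (f : ℝ → ℝ) (hf : ContDiff ℝ r f) :
    ∀ x ∈ Set.Icc (0:ℝ) 1,
      |iteratedDeriv r (bernsteinOp n f) x - bernsteinOp (n - r) (iteratedDeriv r f) x| ≤
        (r : ℝ) * ((r : ℝ) - 1) / (2 * (n : ℝ)) * supNorm (iteratedDeriv r f)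
          + modCont (iteratedDeriv r f) ((r : ℝ) / (n : ℝ)) := by
  intro x hx
  have hn0 : (0:ℝ) < n := by exact_mod_cast hn
  have hgc : Continuous (iteratedDeriv r f) := hf.continuous_iteratedDeriv r le_rfl
  have hM0 : 0 ≤ supNorm (iteratedDeriv r f) := supNorm_nonneg hgc
  have hω0 : 0 ≤ modCont (iteratedDeriv r f) ((r:ℝ)/n) :=
    modCont_nonneg hgc (by positivity)
  obtain ⟨hc0, hc1, hcb⟩ := coeff_facts n r hn hr
  choose ξ hξ hval using fdiff_mvt n hn r f hf
  have hB := iteratedDeriv_bSum n (fun k => f ((k:ℝ)/n)) r hr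
  have hBf : bernsteinOp n f = bSum n (fun k => f ((k:ℝ)/n)) := rfl
  set c := (∏ i ∈ Finset.range r, ((n:ℝ) - i)) * (1/(n:ℝ))^r with hcdef
  set M := supNorm (iteratedDeriv r f) with hMdef
  set ω := modCont (iteratedDeriv r f) ((r:ℝ)/n) with hωdef
  have key : iteratedDeriv r (bernsteinOp n f) x - bernsteinOp (n-r) (iteratedDeriv r f) x
      = ∑ k ∈ Finset.range (n-r+1), bern (n-r) k x *
          (c * iteratedDeriv r f (ξ k) - iteratedDeriv r f ((k:ℝ)/((n-r:ℕ):ℝ))) := by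
    rw [hBf, hB]
    simp only [bSum, bernsteinOp]
    rw [Finset.mul_sum, ← Finset.sum_sub_distrib]
    refine Finset.sum_congr rfl (fun k hk => ?_)
    rw [hval k, hcdef]
    ring
  rw [key]
  have hterm : ∀ k ∈ Finset.range (n-r+1),
      |bern (n-r) k x * (c * iteratedDeriv r f (ξ k)
          - iteratedDeriv r f ((k:ℝ)/((n-r:ℕ):ℝ)))|
        ≤ bern (n-r) k x * ((1 - c) * M + ω) := by
    intro k hk
    have hkle : k ≤ n - r := Nat.lt_succ_iff.mp (Finset.mem_range.mp hk)
    have hbn := bern_nonneg (m := n-r) (k := k) hx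
    rw [abs_mul, abs_of_nonneg hbn]
    refine mul_le_mul_of_nonneg_left ?_ hbn
    obtain ⟨hξ1, hξ2⟩ := hξ k
    have hkr : (k:ℝ) + r ≤ n := by
      have h' : k + r ≤ n := by omega
      exact_mod_cast h'
    have hξmem : ξ k ∈ Set.Icc (0:ℝ) 1 :=
      ⟨le_trans (by positivity) hξ1,
       le_trans hξ2 (by rw [div_le_one hn0]; exact hkr)⟩
    have hqmem : (k:ℝ)/((n-r:ℕ):ℝ) ∈ Set.Icc (0:ℝ) 1 := by
      rcases Nat.eq_zero_or_pos (n - r) with h0 | hpos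
      · have hk0 : k = 0 := by omega
        rw [h0, hk0]
        norm_num
      · have hp : (0:ℝ) < ((n-r:ℕ):ℝ) := by exact_mod_cast hpos
        exact ⟨by positivity, by rw [div_le_one hp]; exact_mod_cast hkle⟩
    have hdist := dist_node_le n r k hn hr hkle hξ1 hξ2
    have hmod := abs_sub_le_modCont hgc hξmem hqmem hdist
    have hsup := abs_le_supNorm hgc hξmem
    have split : c * iteratedDeriv r f (ξ k) - iteratedDeriv r f ((k:ℝ)/((n-r:ℕ):ℝ))
        = (c - 1) * iteratedDeriv r f (ξ k)
          + (iteratedDeriv r f (ξ k) - iteratedDeriv r f ((k:ℝ)/((n-r:ℕ):ℝ))) := by ring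
    rw [split]
    calc |(c - 1) * iteratedDeriv r f (ξ k)
          + (iteratedDeriv r f (ξ k) - iteratedDeriv r f ((k:ℝ)/((n-r:ℕ):ℝ)))|
        ≤ |(c - 1) * iteratedDeriv r f (ξ k)|
          + |iteratedDeriv r f (ξ k) - iteratedDeriv r f ((k:ℝ)/((n-r:ℕ):ℝ))| := abs_add_le _ _
      _ = (1 - c) * |iteratedDeriv r f (ξ k)|
          + |iteratedDeriv r f (ξ k) - iteratedDeriv r f ((k:ℝ)/((n-r:ℕ):ℝ))| := by
          rw [abs_mul, abs_of_nonpos (by linarith : c - 1 ≤ 0)]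
          ring
      _ ≤ (1 - c) * M + ω :=
          add_le_add (mul_le_mul_of_nonneg_left hsup (by linarith)) hmod
  calc |∑ k ∈ Finset.range (n-r+1), bern (n-r) k x *
          (c * iteratedDeriv r f (ξ k) - iteratedDeriv r f ((k:ℝ)/((n-r:ℕ):ℝ)))|
      ≤ ∑ k ∈ Finset.range (n-r+1), |bern (n-r) k x *
          (c * iteratedDeriv r f (ξ k) - iteratedDeriv r f ((k:ℝ)/((n-r:ℕ):ℝ)))| :=
        Finset.abs_sum_le_sum_abs _ _
    _ ≤ ∑ k ∈ Finset.range (n-r+1), bern (n-r) k x * ((1 - c) * M + ω) :=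
        Finset.sum_le_sum hterm
    _ = (1 - c) * M + ω := by
        rw [← Finset.sum_mul, bern_sum_eq_one, one_mul]
    _ ≤ (r : ℝ) * ((r : ℝ) - 1) / (2 * (n : ℝ)) * M + ω :=
        add_le_add_left (mul_le_mul_of_nonneg_right hcb hM0) ω
end

section
/- Let F : C[0,1] → ℝ be a positive linear functional with F(e₀) = 1 and F(e₁) = b (so in particular b ∈ [0,1]). Then for every twice continuously differentiable function φ : [0,1] → ℝ there exists ξ ∈ [0,1] such that F(φ) − φ(b) = (F(e₂) − b²) · φ''(ξ)/2. -/
/-- The monomial `e_r(x) = x^r` as a continuous map on `[0,1]`. -/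
noncomputable def eMon (r : ℕ) : C(Set.Icc (0:ℝ) 1, ℝ) :=
  ⟨fun x => (x : ℝ) ^ r, by continuity⟩

/-- Tangent line lies below a convex function. -/
lemma convexOn_tangent_le {S : Set ℝ} {ψ : ℝ → ℝ} (hc : ConvexOn ℝ S ψ)
    {b x : ℝ} (hb : b ∈ S) (hx : x ∈ S) (hd : DifferentiableAt ℝ ψ b) :
    ψ b + deriv ψ b * (x - b) ≤ ψ x := by
  rcases lt_trichotomy b x with h | h | h
  · have h1 := hc.deriv_le_slope hb hx h hd
    rw [slope_def_field] at h1
    have hxb : 0 < x - b := by linarith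
    rw [le_div_iff₀ hxb] at h1
    nlinarith
  · simp [h]
  · have h1 := hc.slope_le_deriv hx hb h hd
    rw [slope_def_field] at h1
    have hxb : 0 < b - x := by linarith
    rw [div_le_iff₀ hxb] at h1
    nlinarith

theorem positive_functional_mean_value
    (F : C(Set.Icc (0:ℝ) 1, ℝ) →ₗ[ℝ] ℝ)
    (hFpos : ∀ g : C(Set.Icc (0:ℝ) 1, ℝ), (∀ x, 0 ≤ g x) → 0 ≤ F g)
    (b : ℝ) (hF0 : F (eMon 0) = 1) (hF1 : F (eMon 1) = b)
    (φ : ℝ → ℝ) (hφ : ContDiff ℝ 2 φ) :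
    ∃ ξ ∈ Set.Icc (0:ℝ) 1,
      F ⟨fun x => φ x, hφ.continuous.comp continuous_subtype_val⟩ - φ b =
        (F (eMon 2) - b ^ 2) * iteratedDeriv 2 φ ξ / 2 := by
  classical
  set f := iteratedDeriv 2 φ with hf
  have hφd : Differentiable ℝ φ := hφ.differentiable (by norm_num)
  have hφ'd : Differentiable ℝ (deriv φ) := by
    have := hφ.differentiable_iteratedDeriv 1 (by norm_num)
    simpa [iteratedDeriv_one] using this
  have hfc : Continuous f := hφ.continuous_iteratedDeriv 2 le_rfl
  have hfderiv : f = deriv (deriv φ) := by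
    rw [hf, show (2:ℕ) = 1 + 1 from rfl, iteratedDeriv_succ, iteratedDeriv_one]
  -- b ∈ [0,1]
  have hb0 : 0 ≤ b := by
    rw [← hF1]; exact hFpos _ fun x => by
      simpa [eMon] using x.2.1
  have hb1 : b ≤ 1 := by
    have : 0 ≤ F (eMon 0 - eMon 1) := hFpos _ fun x => by
      simp only [eMon, ContinuousMap.sub_apply, ContinuousMap.coe_mk]
      have := x.2.2; simp; linarith
    rw [map_sub, hF0, hF1] at this; linarith
  have hbI : b ∈ Set.Icc (0:ℝ) 1 := ⟨hb0, hb1⟩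
  -- min and max of f on [0,1]
  obtain ⟨xm, hxmI, hxm⟩ := isCompact_Icc.exists_isMinOn (Set.nonempty_Icc.2 zero_le_one)
    hfc.continuousOn
  obtain ⟨xM, hxMI, hxM⟩ := isCompact_Icc.exists_isMaxOn (Set.nonempty_Icc.2 zero_le_one)
    hfc.continuousOn
  set m := f xm with hm
  set M := f xM with hM
  have hmM : m ≤ M := hxM hxmI
  have hint : interior (Set.Icc (0:ℝ) 1) = Set.Ioo 0 1 := interior_Icc
  -- a general tangent bound for functions of the form ε • φ + quadratic
  have habs : ∀ (ε c : ℝ), (∀ y ∈ Set.Icc (0:ℝ) 1, 0 ≤ ε * f y - c) →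
      ∀ x ∈ Set.Icc (0:ℝ) 1,
      ε * φ b + ε * deriv φ b * (x - b) + c / 2 * (x - b)^2 ≤ ε * φ x := by
    intro ε c hcle x hxI
    set ψ : ℝ → ℝ := fun y => ε * φ y - c / 2 * y ^ 2 with hψ
    have hψd : Differentiable ℝ ψ := (hφd.const_mul ε).sub (by fun_prop)
    have hψderiv : deriv ψ = fun y => ε * deriv φ y - c * y := by
      funext y
      rw [hψ, deriv_fun_sub ((hφd y).const_mul ε) (by fun_prop)]
      rw [deriv_const_mul ε (hφd y)]
      simp [deriv_pow_field]
      ring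
    have hconv : ConvexOn ℝ (Set.Icc (0:ℝ) 1) ψ := by
      apply convexOn_of_deriv2_nonneg (convex_Icc 0 1) hψd.continuous.continuousOn
        hψd.differentiableOn
      · rw [hψderiv]
        exact ((hφ'd.const_mul ε).sub (by fun_prop)).differentiableOn
      · intro y hy
        rw [hint] at hy
        have h1 : deriv^[2] ψ y = deriv (deriv ψ) y := by
          simp [Function.iterate_succ, Function.comp]
        rw [h1, hψderiv]
        have h2 : deriv (fun y => ε * deriv φ y - c * y) y
            = ε * deriv (deriv φ) y - c := by
          rw [deriv_fun_sub ((hφ'd y).const_mul ε) (by fun_prop)]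
          rw [deriv_const_mul ε (hφ'd y)]
          have : deriv (fun y => c * y) y = c := by
            simpa using ((hasDerivAt_id y).const_mul c).deriv
          rw [this]
        rw [h2, ← hfderiv]
        exact hcle y (Set.mem_Icc_of_Ioo hy)
    have htan := convexOn_tangent_le hconv hbI hxI (hψd b)
    rw [hψderiv] at htan
    simp only [hψ] at htan
    ring_nf at htan ⊢
    linarith
  have key : ∀ x ∈ Set.Icc (0:ℝ) 1,
      m / 2 * (x - b) ^ 2 ≤ φ x - φ b - deriv φ b * (x - b) ∧
      φ x - φ b - deriv φ b * (x - b) ≤ M / 2 * (x - b) ^ 2 := by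
    intro x hxI
    constructor
    · have h1 := habs 1 m (fun y hy => by
        have h : f xm ≤ f y := hxm hy
        simp only [one_mul]; linarith) x hxI
      ring_nf at h1 ⊢
      linarith
    · have h1 := habs (-1) (-M) (fun y hy => by
        have h : f y ≤ f xM := hxM hy
        simp only [neg_one_mul, hM]; linarith) x hxI
      ring_nf at h1 ⊢
      linarith
  -- continuous maps
  set Φ : C(Set.Icc (0:ℝ) 1, ℝ) :=
    ⟨fun x => φ x, hφ.continuous.comp continuous_subtype_val⟩ with hΦ
  set Q : C(Set.Icc (0:ℝ) 1, ℝ) := eMon 2 - (2*b) • eMon 1 + b^2 • eMon 0 with hQ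
  have hQapp : ∀ x : Set.Icc (0:ℝ) 1, Q x = ((x:ℝ) - b)^2 := by
    intro x
    simp [hQ, eMon]
    ring
  have hFQ : F Q = F (eMon 2) - b ^ 2 := by
    rw [hQ, map_add, map_sub, map_smul, map_smul, hF0, hF1]
    simp only [smul_eq_mul, mul_one]
    ring
  set A := F (eMon 2) - b ^ 2 with hA
  have hA0 : 0 ≤ A := by
    rw [← hFQ]
    exact hFpos _ fun x => by rw [hQapp]; positivity
  -- the linear part
  set L : C(Set.Icc (0:ℝ) 1, ℝ) :=
    Φ - (φ b) • eMon 0 - (deriv φ b) • (eMon 1 - b • eMon 0) with hL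
  have hLapp : ∀ x : Set.Icc (0:ℝ) 1,
      L x = φ x - φ b - deriv φ b * ((x:ℝ) - b) := by
    intro x
    simp [hL, hΦ, eMon]
  have hFL : F L = F Φ - φ b := by
    rw [hL, map_sub, map_sub, map_smul, map_smul, map_sub, map_smul, hF0, hF1]
    simp
  set c := F Φ - φ b with hc
  have hlow : m / 2 * A ≤ c := by
    have h1 : 0 ≤ F (L - (m/2) • Q) := hFpos _ fun x => by
      rw [ContinuousMap.sub_apply, ContinuousMap.smul_apply, hLapp, hQapp]
      have := (key x x.2).1
      simp only [smul_eq_mul]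
      linarith
    rw [map_sub, map_smul, hFL, hFQ] at h1
    simp only [smul_eq_mul] at h1
    rw [hc, hA]
    linarith
  have hhigh : c ≤ M / 2 * A := by
    have h1 : 0 ≤ F ((M/2) • Q - L) := hFpos _ fun x => by
      rw [ContinuousMap.sub_apply, ContinuousMap.smul_apply, hLapp, hQapp]
      have := (key x x.2).2
      simp only [smul_eq_mul]
      linarith
    rw [map_sub, map_smul, hFL, hFQ] at h1
    simp only [smul_eq_mul] at h1
    rw [hc, hA]
    linarith
  rcases eq_or_lt_of_le hA0 with hAz | hApos
  · -- A = 0 : c = 0, any ξ works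
    refine ⟨0, Set.left_mem_Icc.2 zero_le_one, ?_⟩
    have hc0 : c = 0 := by
      rw [← hAz] at hlow hhigh
      simp only [mul_zero] at hlow hhigh
      linarith
    show c = A * f 0 / 2
    rw [hc0, ← hAz]
    ring
  · -- A > 0 : intermediate value
    set t := 2 * c / A with ht
    have htm : m ≤ t := by
      rw [ht, le_div_iff₀ hApos]
      calc m * A = 2 * (m / 2 * A) := by ring
        _ ≤ 2 * c := by linarith
    have htM : t ≤ M := by
      rw [ht, div_le_iff₀ hApos]
      calc 2 * c ≤ 2 * (M / 2 * A) := by linarith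
        _ = M * A := by ring
    have hsub : Set.uIcc xm xM ⊆ Set.Icc (0:ℝ) 1 := Set.uIcc_subset_Icc hxmI hxMI
    have hIV := intermediate_value_uIcc (hfc.continuousOn (s := Set.uIcc xm xM))
    have htmem : t ∈ Set.uIcc (f xm) (f xM) := by
      rw [Set.uIcc_of_le hmM]
      exact ⟨htm, htM⟩
    obtain ⟨ξ, hξmem, hξ⟩ := hIV htmem
    refine ⟨ξ, hsub hξmem, ?_⟩
    show c = A * f ξ / 2
    rw [hξ, ht]
    have hAne : A ≠ 0 := ne_of_gt hApos
    field_simp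
end
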